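/- Let E = E({c_n}) ⊂ ℝ be the self-similar-type set generated from E₀ = {0,1} by the recursion E_n = E_{n−1} ∪ E¹_{n−1} ∪ E²_{n−1} (E¹_{n−1} a copy of E_{n−1} contracted by factor c_n appended at the right end, E²_{n−1} an uncontracted translate appended after), with c_n = 1 − 1/(2n). Let Q_n be the smallest interval containing E_n and X_{Q_n}(ω) the length of the connected component of Q_n° \ E containing ω, viewed as a random variable under normalized Lebesgue measure on Q_n. Then E[X_{Q_n}] · E[X_{Q_n}^{-1}] = ∏_{i=1}^{n} 3(2 + c_i²)/(2 + c_i)², and this product is bounded uniformly in n by e^{π²/75}. -/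

import Mathlib

open MeasureTheory Set
open scoped Classical Real

/-- One step of the construction: given the current finite stage `(S, r)` (a set with
right endpoint `r` starting at `0`), append a copy contracted by `c` and then an
uncontracted translated copy. -/
noncomputable def EfinStep (c : ℝ) (p : Set ℝ × ℝ) : Set ℝ × ℝ :=
  (p.1 ∪ (fun x => p.2 + c * x) '' p.1 ∪ (fun x => p.2 * (1 + c) + x) '' p.1,
    p.2 * (2 + c))

/-- The finite stages `(Eₙ, rₙ)` of the construction of `E⁺({cₙ})`, starting from
`E₀ = {0,1}` with right endpoint `r₀ = 1`. -/
noncomputable def Efin (c : ℕ → ℝ) : ℕ → Set ℝ × ℝ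
  | 0 => ({0, 1}, 1)
  | n + 1 => EfinStep (c (n + 1)) (Efin c n)

/-- `E⁺({cₙ}) = ⋃ₙ Eₙ`. -/
noncomputable def Eplus (c : ℕ → ℝ) : Set ℝ := ⋃ n, (Efin c n).1

/-- `E({cₙ}) = E⁻ ∪ E⁺` where `E⁻` is the reflection of `E⁺` through the origin. -/
noncomputable def Eset (c : ℕ → ℝ) : Set ℝ :=
  (fun x : ℝ => -x) '' Eplus c ∪ Eplus c

/-- `Qₙ`, the smallest interval containing `Eₙ`, namely `[0, rₙ]`. -/
noncomputable def Qn (c : ℕ → ℝ) (n : ℕ) : Set ℝ := Set.Icc 0 (Efin c n).2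

/-- `X_{Qₙ}(ω)`: the length of the connected component of `Qₙ° \ E` containing `ω`
(zero when `ω` belongs to no such component). -/
noncomputable def Xn (c : ℕ → ℝ) (n : ℕ) (ω : ℝ) : ℝ :=
  (volume (connectedComponentIn (interior (Qn c n) \ Eset c) ω)).toReal

/-- The particular sequence of contractions `cₙ = 1 − 1/(2n)`. -/
noncomputable def cseq : ℕ → ℝ := fun n => 1 - 1 / (2 * n)

lemma comp_eq_Ioo {U : Set ℝ} {a b ω : ℝ} (hω : ω ∈ Set.Ioo a b)
    (hsub : Set.Ioo a b ⊆ U) (ha : a ∉ U) (hb : b ∉ U) :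
    connectedComponentIn U ω = Set.Ioo a b := by
  apply Subset.antisymm
  · intro x hx
    have hpc : IsPreconnected (connectedComponentIn U ω) := isPreconnected_connectedComponentIn
    have hoc : OrdConnected (connectedComponentIn U ω) := hpc.ordConnected
    have hωc : ω ∈ connectedComponentIn U ω :=
      mem_connectedComponentIn (hsub hω)
    have hUc : connectedComponentIn U ω ⊆ U := connectedComponentIn_subset U ω
    constructor
    · by_contra h
      push_neg at h
      have : a ∈ connectedComponentIn U ω := hoc.out hx hωc ⟨h, le_of_lt hω.1⟩
      exact ha (hUc this)
    · by_contra h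
      push_neg at h
      have : b ∈ connectedComponentIn U ω := hoc.out hωc hx ⟨le_of_lt hω.2, h⟩
      exact hb (hUc this)
  · exact isPreconnected_Ioo.subset_connectedComponentIn hω hsub

lemma cseq_lb {i : ℕ} (hi : 1 ≤ i) : (1:ℝ)/2 ≤ cseq i := by
  have : (1:ℝ) ≤ i := by exact_mod_cast hi
  have h2 : (1:ℝ)/(2*i) ≤ 1/2 := by
    apply div_le_div_of_nonneg_left <;> nlinarith
  simp only [cseq]; linarith

lemma cseq_ub {i : ℕ} (hi : 1 ≤ i) : cseq i < 1 := by
  have : (1:ℝ) ≤ i := by exact_mod_cast hi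
  have : (0:ℝ) < 1/(2*i) := by positivity
  simp only [cseq]; linarith

lemma cseq_le_one {i : ℕ} (hi : 1 ≤ i) : cseq i ≤ 1 := le_of_lt (cseq_ub hi)

lemma cseq_pos {i : ℕ} (hi : 1 ≤ i) : 0 < cseq i := lt_of_lt_of_le (by norm_num) (cseq_lb hi)

lemma r_pos (n : ℕ) : 0 < (Efin cseq n).2 := by
  induction n with
  | zero => norm_num [Efin]
  | succ n ih =>
    have hc := cseq_pos (Nat.le_add_left 1 n)
    simp only [Efin, EfinStep]
    nlinarith

lemma r_mono : Monotone fun n => (Efin cseq n).2 := by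
  apply monotone_nat_of_le_succ
  intro n
  have := r_pos n
  have hc := cseq_pos (Nat.le_add_left 1 n)
  simp only [Efin, EfinStep]
  nlinarith

lemma E_subset (n : ℕ) : (Efin cseq n).1 ⊆ Icc 0 (Efin cseq n).2 := by
  induction n with
  | zero => intro x hx; rcases hx with h | h <;> simp_all [Efin]
  | succ n ih =>
    have hr := r_pos n
    have hc := cseq_pos (Nat.le_add_left 1 n)
    have hc1 := le_of_lt (cseq_ub (Nat.le_add_left 1 n))
    intro x hx
    simp only [Efin, EfinStep] at hx ⊢
    rcases hx with (hx | ⟨y, hy, rfl⟩) | ⟨y, hy, rfl⟩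
    · have := ih hx; constructor <;> [exact this.1; nlinarith [this.2]]
    · have h := ih hy; simp only [mem_Icc] at h; dsimp only
      constructor <;> nlinarith [h.1, h.2]
    · have h := ih hy; simp only [mem_Icc] at h; dsimp only
      constructor <;> nlinarith [h.1, h.2]

lemma zero_mem (n : ℕ) : (0:ℝ) ∈ (Efin cseq n).1 := by
  induction n with
  | zero => simp [Efin]
  | succ n ih => left; left; exact ih

lemma r_mem (n : ℕ) : (Efin cseq n).2 ∈ (Efin cseq n).1 := by
  induction n with
  | zero => simp [Efin]
  | succ n ih =>
    simp only [Efin, EfinStep]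
    right
    exact ⟨(Efin cseq n).2, ih, by ring⟩


noncomputable def gaps : ℕ → List (ℝ × ℝ)
  | 0 => [((0:ℝ), (1:ℝ))]
  | n + 1 =>
      gaps n
        ++ (gaps n).map (fun p => ((Efin cseq n).2 + cseq (n+1) * p.1,
              (Efin cseq n).2 + cseq (n+1) * p.2))
        ++ (gaps n).map (fun p => ((Efin cseq n).2 * (1 + cseq (n+1)) + p.1,
              (Efin cseq n).2 * (1 + cseq (n+1)) + p.2))

lemma gaps_length (n : ℕ) : (gaps n).length = 3 ^ n := by
  induction n with
  | zero => rfl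
  | succ n ih => simp [gaps, ih]; ring

lemma gapE (n : ℕ) : ∀ p ∈ gaps n,
    0 ≤ p.1 ∧ p.1 < p.2 ∧ p.2 ≤ (Efin cseq n).2 ∧
      p.1 ∈ (Efin cseq n).1 ∧ p.2 ∈ (Efin cseq n).1 := by
  induction n with
  | zero =>
    intro p hp
    simp only [gaps, List.mem_singleton] at hp
    subst hp
    refine ⟨le_refl _, by norm_num, by simp [Efin], by simp [Efin], by simp [Efin]⟩
  | succ n ih =>
    have hc := cseq_pos (Nat.le_add_left 1 n)
    have hc1 := cseq_le_one (Nat.le_add_left 1 n)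
    have hr := r_pos n
    intro p hp
    simp only [gaps, List.mem_append, List.mem_map] at hp
    rcases hp with (hp | ⟨q, hq, rfl⟩) | ⟨q, hq, rfl⟩
    · obtain ⟨h0, hlt, hle, hm1, hm2⟩ := ih p hp
      refine ⟨h0, hlt, ?_, Or.inl (Or.inl hm1), Or.inl (Or.inl hm2)⟩
      show p.2 ≤ (Efin cseq n).2 * (2 + cseq (n+1))
      nlinarith
    · obtain ⟨h0, hlt, hle, hm1, hm2⟩ := ih q hq
      refine ⟨by positivity, by dsimp; nlinarith, ?_, ?_, ?_⟩
      · show (Efin cseq n).2 + cseq (n+1) * q.2 ≤ (Efin cseq n).2 * (2 + cseq (n+1))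
        nlinarith
      · exact Or.inl (Or.inr ⟨q.1, hm1, rfl⟩)
      · exact Or.inl (Or.inr ⟨q.2, hm2, rfl⟩)
    · obtain ⟨h0, hlt, hle, hm1, hm2⟩ := ih q hq
      refine ⟨by positivity, by dsimp; nlinarith, ?_, ?_, ?_⟩
      · show (Efin cseq n).2 * (1 + cseq (n+1)) + q.2 ≤ (Efin cseq n).2 * (2 + cseq (n+1))
        nlinarith
      · exact Or.inr ⟨q.1, hm1, rfl⟩
      · exact Or.inr ⟨q.2, hm2, rfl⟩

lemma gapD (n : ℕ) : ∀ x : ℝ,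
    (x ∈ Ioo 0 (Efin cseq n).2 ∧ x ∉ (Efin cseq n).1) ↔
      ∃ p ∈ gaps n, x ∈ Ioo p.1 p.2 := by
  induction n with
  | zero =>
    intro x
    constructor
    · rintro ⟨hx, hxE⟩
      exact ⟨(0,1), List.mem_singleton.2 rfl, hx⟩
    · rintro ⟨p, hp, hx⟩
      simp only [gaps, List.mem_singleton] at hp
      subst hp
      refine ⟨hx, ?_⟩
      intro h
      rcases h with h | h
      · rw [h] at hx; exact lt_irrefl _ hx.1
      · simp only [mem_singleton_iff] at h; rw [h] at hx; exact lt_irrefl _ hx.2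
  | succ n ih =>
    have hc := cseq_pos (Nat.le_add_left 1 n)
    have hc1 := cseq_le_one (Nat.le_add_left 1 n)
    have hr := r_pos n
    set r := (Efin cseq n).2 with hrdef
    set c := cseq (n+1) with hcdef
    have hr' : (Efin cseq (n+1)).2 = r * (2 + c) := rfl
    have hE' : (Efin cseq (n+1)).1 =
        (Efin cseq n).1 ∪ (fun x => r + c * x) '' (Efin cseq n).1
          ∪ (fun x => r * (1 + c) + x) '' (Efin cseq n).1 := rfl
    intro x
    rw [hr', hE']
    constructor
    · rintro ⟨⟨hx0, hxr'⟩, hxE⟩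
      obtain ⟨⟨hxE0, hxE1⟩, hxE2⟩ :
          (x ∉ (Efin cseq n).1 ∧ ¬ ∃ y ∈ (Efin cseq n).1, r + c * y = x) ∧
            ¬ ∃ y ∈ (Efin cseq n).1, r * (1 + c) + y = x := by
        constructor
        · constructor
          · intro h; exact hxE (Or.inl (Or.inl h))
          · rintro ⟨y, hy, hxy⟩; exact hxE (Or.inl (Or.inr ⟨y, hy, hxy⟩))
        · rintro ⟨y, hy, hxy⟩; exact hxE (Or.inr ⟨y, hy, hxy⟩)
      rcases lt_trichotomy x r with h1 | h1 | h1
      · obtain ⟨p, hp, hxp⟩ := (ih x).1 ⟨⟨hx0, h1⟩, hxE0⟩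
        exact ⟨p, by simp only [gaps, List.mem_append]; exact Or.inl (Or.inl hp), hxp⟩
      · exact absurd (h1 ▸ r_mem n) hxE0
      · rcases lt_trichotomy x (r * (1+c)) with h2 | h2 | h2
        · set y := (x - r) / c with hy
          have hyIoo : y ∈ Ioo 0 r := by
            constructor
            · rw [hy, lt_div_iff₀ hc]; nlinarith
            · rw [hy, div_lt_iff₀ hc]; nlinarith
          have hfy : r + c * y = x := by rw [hy]; field_simp; ring
          have hyE : y ∉ (Efin cseq n).1 := fun h => hxE1 ⟨y, h, hfy⟩
          obtain ⟨p, hp, hxp⟩ := (ih y).1 ⟨hyIoo, hyE⟩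
          refine ⟨(r + c * p.1, r + c * p.2), ?_, ?_⟩
          · simp only [gaps, List.mem_append, List.mem_map]
            exact Or.inl (Or.inr ⟨p, hp, rfl⟩)
          · constructor
            · show r + c * p.1 < x; rw [← hfy]; have := hxp.1; nlinarith
            · show x < r + c * p.2; rw [← hfy]; have := hxp.2; nlinarith
        · exact absurd ⟨0, zero_mem n, by rw [← h2]; ring⟩ hxE2
        · set y := x - r * (1 + c) with hy
          have hyIoo : y ∈ Ioo 0 r := by
            constructor
            · rw [hy]; nlinarith
            · rw [hy]; nlinarith
          have hgy : r * (1 + c) + y = x := by rw [hy]; ring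
          have hyE : y ∉ (Efin cseq n).1 := fun h => hxE2 ⟨y, h, hgy⟩
          obtain ⟨p, hp, hxp⟩ := (ih y).1 ⟨hyIoo, hyE⟩
          refine ⟨(r * (1 + c) + p.1, r * (1 + c) + p.2), ?_, ?_⟩
          · simp only [gaps, List.mem_append, List.mem_map]
            exact Or.inr ⟨p, hp, rfl⟩
          · constructor
            · show r * (1 + c) + p.1 < x; have := hxp.1; nlinarith
            · show x < r * (1 + c) + p.2; have := hxp.2; nlinarith
    · rintro ⟨p, hp, hxp⟩
      simp only [gaps, List.mem_append, List.mem_map] at hp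
      rcases hp with (hp | ⟨q, hq, rfl⟩) | ⟨q, hq, rfl⟩
      · obtain ⟨hIoo, hnE⟩ := (ih x).2 ⟨p, hp, hxp⟩
        refine ⟨⟨hIoo.1, by nlinarith [hIoo.2]⟩, ?_⟩
        rintro ((h | ⟨y, hy, hyx⟩) | ⟨y, hy, hyx⟩)
        · exact hnE h
        · have hy0 := (E_subset n hy).1
          have hyx' : r + c * y = x := hyx
          have hxr : x < r := hIoo.2
          nlinarith
        · have hy0 := (E_subset n hy).1
          have hyx' : r * (1 + c) + y = x := hyx
          have hxr : x < r := hIoo.2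
          nlinarith
      · obtain ⟨h0, hlt, hle, hm1, hm2⟩ := gapE n q hq
        obtain ⟨hxl, hxu⟩ := hxp
        dsimp at hxl hxu
        set y := (x - r) / c with hy
        have hfy : r + c * y = x := by rw [hy]; field_simp; ring
        have hyq : y ∈ Ioo q.1 q.2 := by
          constructor
          · rw [hy, lt_div_iff₀ hc]; nlinarith
          · rw [hy, div_lt_iff₀ hc]; nlinarith
        obtain ⟨hIoo, hnE⟩ := (ih y).2 ⟨q, hq, hyq⟩
        have hxgtr : r < x := by nlinarith
        have hxltr1c : x < r * (1 + c) := by nlinarith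
        refine ⟨⟨by nlinarith, by nlinarith⟩, ?_⟩
        rintro ((h | ⟨z, hz, hzx⟩) | ⟨z, hz, hzx⟩)
        · have := (E_subset n h).2; nlinarith
        · apply hnE
          have hzx' : r + c * z = x := hzx
          have : z = y := by
            rw [← hfy] at hzx'
            have : c * z = c * y := by linarith
            exact mul_left_cancel₀ (ne_of_gt hc) this
          rwa [← this]
        · have hz0 := (E_subset n hz).1
          have hzx' : r * (1 + c) + z = x := hzx
          nlinarith
      · obtain ⟨h0, hlt, hle, hm1, hm2⟩ := gapE n q hq
        obtain ⟨hxl, hxu⟩ := hxp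
        dsimp at hxl hxu
        set y := x - r * (1 + c) with hy
        have hgy : r * (1 + c) + y = x := by rw [hy]; ring
        have hyq : y ∈ Ioo q.1 q.2 := ⟨by rw [hy]; nlinarith, by rw [hy]; nlinarith⟩
        obtain ⟨hIoo, hnE⟩ := (ih y).2 ⟨q, hq, hyq⟩
        have hxgt : r * (1 + c) < x := by nlinarith
        refine ⟨⟨by nlinarith, by nlinarith [hIoo.2]⟩, ?_⟩
        rintro ((h | ⟨z, hz, hzx⟩) | ⟨z, hz, hzx⟩)
        · have := (E_subset n h).2; nlinarith
        · have hz1 := (E_subset n hz).2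
          have hzx' : r + c * z = x := hzx
          nlinarith
        · apply hnE
          have hzx' : r * (1 + c) + z = x := hzx
          have : z = y := by rw [hy]; linarith
          rwa [← this]

lemma gapF (n : ℕ) :
    (gaps n).Pairwise (fun p q => Disjoint (Ioo p.1 p.2) (Ioo q.1 q.2)) := by
  induction n with
  | zero => simp [gaps]
  | succ n ih =>
    have hc := cseq_pos (Nat.le_add_left 1 n)
    have hc1 := cseq_le_one (Nat.le_add_left 1 n)
    have hr := r_pos n
    set r := (Efin cseq n).2 with hrdef
    set c := cseq (n+1) with hcdef
    have habs : ∀ (a b a' b' : ℝ), b ≤ a' → Disjoint (Ioo a b) (Ioo a' b') := by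
      intro a b a' b' h
      rw [Set.disjoint_left]
      rintro x ⟨_, h2⟩ ⟨h3, _⟩; linarith
    have keyS : ∀ p q : ℝ × ℝ, Disjoint (Ioo p.1 p.2) (Ioo q.1 q.2) →
        Disjoint (Ioo (r + c * p.1) (r + c * p.2)) (Ioo (r + c * q.1) (r + c * q.2)) := by
      intro p q hd
      rw [Set.disjoint_left] at hd ⊢
      rintro x ⟨h1, h2⟩ ⟨h3, h4⟩
      exact hd (a := (x - r) / c)
        ⟨(lt_div_iff₀ hc).2 (by nlinarith), (div_lt_iff₀ hc).2 (by nlinarith)⟩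
        ⟨(lt_div_iff₀ hc).2 (by nlinarith), (div_lt_iff₀ hc).2 (by nlinarith)⟩
    have keyT : ∀ p q : ℝ × ℝ, Disjoint (Ioo p.1 p.2) (Ioo q.1 q.2) →
        Disjoint (Ioo (r * (1 + c) + p.1) (r * (1 + c) + p.2))
          (Ioo (r * (1 + c) + q.1) (r * (1 + c) + q.2)) := by
      intro p q hd
      rw [Set.disjoint_left] at hd ⊢
      rintro x ⟨h1, h2⟩ ⟨h3, h4⟩
      exact hd (a := x - r * (1 + c)) ⟨by linarith, by linarith⟩ ⟨by linarith, by linarith⟩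
    simp only [gaps]
    rw [List.pairwise_append, List.pairwise_append, List.pairwise_map, List.pairwise_map]
    refine ⟨⟨ih, ?_, ?_⟩, ?_, ?_⟩
    · exact ih.imp (fun h => keyS _ _ h)
    · -- A vs B
      intro p hp q hq
      simp only [List.mem_map] at hq
      obtain ⟨q', hq', rfl⟩ := hq
      obtain ⟨hp0, hplt, hple, _, _⟩ := gapE n p hp
      obtain ⟨hq0, _, _, _, _⟩ := gapE n q' hq'
      exact habs _ _ _ _ (by dsimp; nlinarith)
    · exact ih.imp (fun h => keyT _ _ h)
    · -- (A ++ B) vs C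
      intro p hp q hq
      simp only [List.mem_map] at hq
      obtain ⟨q', hq', rfl⟩ := hq
      obtain ⟨hq0, _, _, _, _⟩ := gapE n q' hq'
      rw [List.mem_append] at hp
      rcases hp with hp | hp
      · obtain ⟨hp0, hplt, hple, _, _⟩ := gapE n p hp
        exact habs _ _ _ _ (by dsimp; nlinarith)
      · simp only [List.mem_map] at hp
        obtain ⟨p', hp', rfl⟩ := hp
        obtain ⟨hp0, hplt, hple, _, _⟩ := gapE n p' hp'
        exact habs _ _ _ _ (by dsimp; nlinarith)

noncomputable def Sg (n : ℕ) : ℝ := ((gaps n).map (fun p => (p.2 - p.1) ^ 2)).sum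

lemma Sg_succ (n : ℕ) : Sg (n + 1) = (2 + cseq (n+1) ^ 2) * Sg n := by
  have hc := cseq_pos (Nat.le_add_left 1 n)
  simp only [Sg, gaps, List.map_append, List.sum_append, List.map_map]
  have h1 : ((gaps n).map ((fun p : ℝ × ℝ => (p.2 - p.1) ^ 2) ∘
      fun p : ℝ × ℝ => ((Efin cseq n).2 + cseq (n+1) * p.1,
        (Efin cseq n).2 + cseq (n+1) * p.2))).sum
      = cseq (n+1) ^ 2 * ((gaps n).map (fun p : ℝ × ℝ => (p.2 - p.1) ^ 2)).sum := by
    rw [← List.sum_map_mul_left]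
    congr 1
    apply List.map_congr_left
    intro p _
    simp only [Function.comp_apply]
    ring
  have h2 : ((gaps n).map ((fun p : ℝ × ℝ => (p.2 - p.1) ^ 2) ∘
      fun p : ℝ × ℝ => ((Efin cseq n).2 * (1 + cseq (n+1)) + p.1,
        (Efin cseq n).2 * (1 + cseq (n+1)) + p.2))).sum
      = ((gaps n).map (fun p : ℝ × ℝ => (p.2 - p.1) ^ 2)).sum := by
    congr 1
    apply List.map_congr_left
    intro p _
    simp only [Function.comp_apply]
    ring
  rw [h1, h2]
  ring

lemma Emono : Monotone fun n => (Efin cseq n).1 := by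
  apply monotone_nat_of_le_succ
  intro n x hx
  exact Or.inl (Or.inl hx)

lemma Ecap (n : ℕ) : ∀ k, (Efin cseq (n + k)).1 ∩ Icc 0 (Efin cseq n).2 ⊆ (Efin cseq n).1 := by
  intro k
  induction k with
  | zero => intro x hx; exact hx.1
  | succ k ih =>
    rintro x ⟨hx, hxI⟩
    have hrm : (Efin cseq n).2 ≤ (Efin cseq (n+k)).2 := r_mono (Nat.le_add_right n k)
    have hr := r_pos (n+k)
    have hc := cseq_pos (Nat.le_add_left 1 (n+k))
    rcases hx with (hx | ⟨y, hy, hyx⟩) | ⟨y, hy, hyx⟩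
    · exact ih ⟨hx, hxI⟩
    · have hy0 := (E_subset (n+k) hy).1
      have hyx' : (Efin cseq (n+k)).2 + cseq (n+k+1) * y = x := hyx
      have hxeq : x = (Efin cseq n).2 := le_antisymm hxI.2 (by nlinarith)
      rw [hxeq]; exact r_mem n
    · have hy0 := (E_subset (n+k) hy).1
      have hyx' : (Efin cseq (n+k)).2 * (1 + cseq (n+k+1)) + y = x := hyx
      have hxeq : x = (Efin cseq n).2 := le_antisymm hxI.2 (by nlinarith)
      rw [hxeq]; exact r_mem n

lemma Eset_cap (n : ℕ) {x : ℝ} (hx : x ∈ Eset cseq) (hxI : x ∈ Ioo 0 (Efin cseq n).2) :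
    x ∈ (Efin cseq n).1 := by
  rcases hx with ⟨y, hy, rfl⟩ | hx
  · obtain ⟨m, hm⟩ := mem_iUnion.1 hy
    have h0 := (E_subset m hm).1
    have h1 : (0:ℝ) < -y := hxI.1
    exfalso; linarith
  · obtain ⟨m, hm⟩ := mem_iUnion.1 hx
    rcases le_or_gt m n with h | h
    · exact Emono h hm
    · have : x ∈ (Efin cseq (n + (m - n))).1 := by
        rwa [Nat.add_sub_cancel' (le_of_lt h)]
      exact Ecap n (m - n) ⟨this, ⟨le_of_lt hxI.1, le_of_lt hxI.2⟩⟩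

lemma En_sub_Eset (n : ℕ) : (Efin cseq n).1 ⊆ Eset cseq :=
  fun x hx => Or.inr (mem_iUnion.2 ⟨n, hx⟩)

lemma U_eq (n : ℕ) : interior (Qn cseq n) \ Eset cseq
    = {x | ∃ p ∈ gaps n, x ∈ Ioo p.1 p.2} := by
  have : interior (Qn cseq n) = Ioo 0 (Efin cseq n).2 := by
    rw [Qn, interior_Icc]
  rw [this]
  ext x
  simp only [mem_diff, mem_setOf_eq]
  constructor
  · rintro ⟨hI, hE⟩
    exact (gapD n x).1 ⟨hI, fun h => hE (En_sub_Eset n h)⟩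
  · intro h
    obtain ⟨hI, hE⟩ := (gapD n x).2 h
    exact ⟨hI, fun hx => hE (Eset_cap n hx hI)⟩

lemma Xn_on_gap {n : ℕ} {p : ℝ × ℝ} (hp : p ∈ gaps n) {ω : ℝ} (hω : ω ∈ Ioo p.1 p.2) :
    Xn cseq n ω = p.2 - p.1 := by
  obtain ⟨h0, hlt, hle, hm1, hm2⟩ := gapE n p hp
  have hU := U_eq n
  have hcomp : connectedComponentIn (interior (Qn cseq n) \ Eset cseq) ω = Ioo p.1 p.2 := by
    apply comp_eq_Ioo hω
    · rw [hU]; intro x hx; exact ⟨p, hp, hx⟩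
    · rw [hU]; rintro ⟨q, hq, hq'⟩
      have := (gapD n p.1).2 ⟨q, hq, hq'⟩
      exact this.2 hm1
    · rw [hU]; rintro ⟨q, hq, hq'⟩
      have := (gapD n p.2).2 ⟨q, hq, hq'⟩
      exact this.2 hm2
  rw [Xn, hcomp, Real.volume_Ioo, ENNReal.toReal_ofReal (by linarith)]

lemma Xn_off {n : ℕ} {ω : ℝ} (hω : ω ∉ interior (Qn cseq n) \ Eset cseq) :
    Xn cseq n ω = 0 := by
  rw [Xn, connectedComponentIn_eq_empty hω, measure_empty, ENNReal.toReal_zero]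

lemma list_sum_fin {α M : Type*} [AddCommMonoid M] (l : List α) (f : α → M) :
    ∑ i : Fin l.length, f (l.get i) = (l.map f).sum := by
  induction l with
  | nil => simp
  | cons a l ih =>
    simp only [List.length_cons]
    rw [Fin.sum_univ_succ]
    simp [ih]

lemma integral_formula (n : ℕ) (v : ℝ × ℝ → ℝ) (f : ℝ → ℝ)
    (hon : ∀ p ∈ gaps n, ∀ ω ∈ Ioo p.1 p.2, f ω = v p)
    (hoff : ∀ ω, ω ∉ interior (Qn cseq n) \ Eset cseq → f ω = 0) :
    ∫ ω in Qn cseq n, f ω = ((gaps n).map (fun p => (p.2 - p.1) * v p)).sum := by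
  set L := gaps n with hL
  have hfeq : f = fun ω => ∑ i : Fin L.length,
      Set.indicator (Ioo (L.get i).1 (L.get i).2) (fun _ => v (L.get i)) ω := by
    funext ω
    by_cases hω : ω ∈ interior (Qn cseq n) \ Eset cseq
    · rw [U_eq n] at hω
      obtain ⟨p, hp, hωp⟩ := hω
      obtain ⟨j, hj⟩ := List.get_of_mem hp
      rw [hon p hp ω hωp]
      rw [Finset.sum_eq_single_of_mem j (Finset.mem_univ j)]
      · rw [hj, Set.indicator_of_mem hωp]
      · intro i _ hij
        apply Set.indicator_of_notMem
        have hdisj : Disjoint (Ioo (L.get i).1 (L.get i).2) (Ioo (L.get j).1 (L.get j).2) := by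
          have hpw := gapF n
          rw [List.pairwise_iff_get] at hpw
          rcases lt_or_gt_of_ne hij with h | h
          · exact hpw i j h
          · exact (hpw j i h).symm
        intro hmem
        rw [hj] at hdisj
        exact (Set.disjoint_left.1 hdisj hmem) hωp
    · rw [hoff ω hω]
      symm
      apply Finset.sum_eq_zero
      intro i _
      apply Set.indicator_of_notMem
      intro hmem
      apply hω
      rw [U_eq n]
      exact ⟨L.get i, List.get_mem L i, hmem⟩
  rw [hfeq]
  have hmes : ∀ i : Fin L.length, MeasurableSet (Ioo (L.get i).1 (L.get i).2) :=
    fun i => measurableSet_Ioo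
  rw [integral_finset_sum]
  · have : ∀ i : Fin L.length,
        ∫ ω in Qn cseq n, Set.indicator (Ioo (L.get i).1 (L.get i).2)
          (fun _ => v (L.get i)) ω
        = ((L.get i).2 - (L.get i).1) * v (L.get i) := by
      intro i
      obtain ⟨h0, hlt, hle, _, _⟩ := gapE n (L.get i) (List.get_mem L i)
      rw [integral_indicator_const _ (hmes i), measureReal_def, Measure.restrict_apply (hmes i)]
      have hsub : Ioo (L.get i).1 (L.get i).2 ∩ Qn cseq n = Ioo (L.get i).1 (L.get i).2 := by
        apply inter_eq_self_of_subset_left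
        intro x hx
        exact ⟨le_of_lt (lt_of_le_of_lt h0 hx.1), le_of_lt (lt_of_lt_of_le hx.2 hle)⟩
      rw [hsub, Real.volume_Ioo, ENNReal.toReal_ofReal (by linarith), smul_eq_mul]
    rw [Finset.sum_congr rfl (fun i _ => this i)]
    exact list_sum_fin L (fun p => (p.2 - p.1) * v p)
  · intro i _
    rw [integrable_indicator_iff (hmes i)]
    exact integrableOn_const (ne_of_lt (lt_of_le_of_lt (Measure.restrict_apply_le _ _)
      (by rw [Real.volume_Ioo]; exact ENNReal.ofReal_lt_top))) enorm_ne_top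

lemma integral_Xn (n : ℕ) : ∫ ω in Qn cseq n, Xn cseq n ω = Sg n := by
  rw [integral_formula n (fun p => p.2 - p.1) _
    (fun p hp ω hω => Xn_on_gap hp hω) (fun ω hω => Xn_off hω)]
  rw [Sg]
  congr 1
  apply List.map_congr_left
  intro p _
  ring

lemma list_sum_one {α : Type*} (l : List α) : (l.map fun _ => (1:ℝ)).sum = l.length := by
  induction l with
  | nil => simp
  | cons a l ih => simp [ih]; ring

lemma integral_Xn_inv (n : ℕ) :
    ∫ ω in Qn cseq n, (Xn cseq n ω)⁻¹ = (3:ℝ) ^ n := by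
  rw [integral_formula n (fun p => (p.2 - p.1)⁻¹) _
    (fun p hp ω hω => by rw [Xn_on_gap hp hω]) (fun ω hω => by rw [Xn_off hω, inv_zero])]
  have : ((gaps n).map (fun p : ℝ × ℝ => (p.2 - p.1) * (p.2 - p.1)⁻¹)).sum
      = ((gaps n).map (fun _ => (1:ℝ))).sum := by
    congr 1
    apply List.map_congr_left
    intro p hp
    obtain ⟨_, hlt, _, _, _⟩ := gapE n p hp
    exact mul_inv_cancel₀ (by linarith)
  rw [this, list_sum_one, gaps_length]
  push_cast
  ring

lemma Sg_zero : Sg 0 = 1 := by simp [Sg, gaps]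

lemma prod_eq (n : ℕ) :
    (∏ i ∈ Finset.Icc 1 n, 3 * (2 + cseq i ^ 2) / (2 + cseq i) ^ 2)
      = Sg n * 3 ^ n / (Efin cseq n).2 ^ 2 := by
  induction n with
  | zero => simp [Sg_zero]; norm_num [Efin]
  | succ n ih =>
    rw [Finset.prod_Icc_succ_top (Nat.le_add_left 1 n), ih, Sg_succ]
    have hr : (Efin cseq (n+1)).2 = (Efin cseq n).2 * (2 + cseq (n+1)) := rfl
    have hrn := r_pos n
    have hc := cseq_pos (Nat.le_add_left 1 n)
    rw [hr]
    field_simp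
    ring

lemma sum_inv_sq_le (n : ℕ) :
    ∑ i ∈ Finset.Icc 1 n, (1:ℝ) / (i:ℝ) ^ 2 ≤ π ^ 2 / 6 := by
  exact sum_le_hasSum (Finset.Icc 1 n) (fun i _ => by positivity) hasSum_zeta_two

lemma factor_le {i : ℕ} (hi : 1 ≤ i) :
    3 * (2 + cseq i ^ 2) / (2 + cseq i) ^ 2 ≤ Real.exp (2 / (25 * (i:ℝ)^2)) := by
  have hx : (1:ℝ) ≤ (i:ℝ) := by exact_mod_cast hi
  have hx0 : (0:ℝ) < (i:ℝ) := by linarith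
  have hc : cseq i = 1 - 1/(2*(i:ℝ)) := rfl
  set t : ℝ := 1/(2*(i:ℝ)) with ht
  have ht0 : 0 < t := by positivity
  have ht2 : t ≤ 1/2 := by
    rw [ht]
    rw [div_le_div_iff₀ (by positivity) (by norm_num)]
    linarith
  have htx : t * (2*(i:ℝ)) = 1 := by rw [ht]; field_simp
  have key : 3 * (2 + cseq i ^ 2) / (2 + cseq i) ^ 2 ≤ 1 + 2 / (25 * (i:ℝ)^2) := by
    rw [hc]
    have h2c : (0:ℝ) < (2 + (1 - t))^2 := by nlinarith
    rw [div_le_iff₀ h2c]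
    have h25 : 2 / (25 * (i:ℝ)^2) = (8/25) * t^2 := by
      rw [ht]; field_simp; ring
    rw [h25]
    nlinarith [mul_nonneg (mul_nonneg (sq_nonneg t) (by linarith : (0:ℝ) ≤ 1/2 - t))
      (by linarith : (0:ℝ) ≤ 11/2 - t), sq_nonneg t]
  refine le_trans key ?_
  have := Real.add_one_le_exp (2 / (25 * (i:ℝ)^2))
  linarith

lemma prod_le (n : ℕ) :
    (∏ i ∈ Finset.Icc 1 n, 3 * (2 + cseq i ^ 2) / (2 + cseq i) ^ 2)
      ≤ Real.exp (π ^ 2 / 75) := by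
  have h1 : (∏ i ∈ Finset.Icc 1 n, 3 * (2 + cseq i ^ 2) / (2 + cseq i) ^ 2)
      ≤ ∏ i ∈ Finset.Icc 1 n, Real.exp (2 / (25 * (i:ℝ)^2)) := by
    apply Finset.prod_le_prod
    · intro i _; positivity
    · intro i hi
      exact factor_le (Finset.mem_Icc.1 hi).1
  refine le_trans h1 ?_
  rw [← Real.exp_sum]
  apply Real.exp_le_exp.2
  have : ∑ i ∈ Finset.Icc 1 n, 2 / (25 * (i:ℝ)^2)
      = (2/25) * ∑ i ∈ Finset.Icc 1 n, (1:ℝ)/(i:ℝ)^2 := by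
    rw [Finset.mul_sum]
    apply Finset.sum_congr rfl
    intro i _
    field_simp
  rw [this]
  have := sum_inv_sq_le n
  nlinarith [Real.pi_pos]

/-- For `E = E({1 − 1/(2n)})`:
`E[X_{Qₙ}] · E[X_{Qₙ}⁻¹] = ∏_{i=1}^{n} 3(2 + cᵢ²)/(2 + cᵢ)²`, and this product is
bounded by `e^{π²/75}` uniformly in `n`. -/
theorem stmt19 (n : ℕ) :
    ((∫ ω in Qn cseq n, Xn cseq n ω) / (Efin cseq n).2) *
        ((∫ ω in Qn cseq n, (Xn cseq n ω)⁻¹) / (Efin cseq n).2) =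
      (∏ i ∈ Finset.Icc 1 n, 3 * (2 + cseq i ^ 2) / (2 + cseq i) ^ 2) ∧
    (∏ i ∈ Finset.Icc 1 n, 3 * (2 + cseq i ^ 2) / (2 + cseq i) ^ 2) ≤
      Real.exp (π ^ 2 / 75) := by
  constructor
  · rw [integral_Xn, integral_Xn_inv, _root_.prod_eq]
    rw [div_mul_div_comm, ← pow_two]
  · exact prod_le n
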